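/- Define f : ℝ → ℝ ∪ {∞} by f(x) = ∞ for x < 0, f(0) = 1, f(x) = 0 for x > 0. Set g = f and h = cl f (the lower semicontinuous hull of f, which equals 0 on [0,∞) and ∞ on (−∞,0)). Then y = 0 is an optimal solution of min_{y ∈ dom h*} [h*(y) − g*(y)] and 0 ∈ ∂g*(0), yet x = 0 is not an optimal solution of min_{x ∈ dom g} [g(x) − h(x)]. -/
import Mathlib


open Set

/-- The function `f(x) = ∞` for `x < 0`, `f(0) = 1`, `f(x) = 0` for `x > 0`. -/
noncomputable def fEx : ℝ → EReal := fun x => if x < 0 then ⊤ else if x = 0 then 1 else 0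

/-- The lower semicontinuous hull of `fEx`: `0` on `[0,∞)`, `∞` on `(−∞,0)`. -/
noncomputable def clfEx : ℝ → EReal := fun x => if x < 0 then ⊤ else 0

/-- One-dimensional Fenchel conjugate. -/
noncomputable def conj1 (f : ℝ → EReal) (y : ℝ) : EReal :=
  ⨆ x : ℝ, (((y * x : ℝ) : EReal) - f x)

/-- One-dimensional subdifferential. -/
def subdiff1 (f : ℝ → EReal) (xb : ℝ) : Set ℝ :=
  {y | f xb ≠ ⊤ ∧ ∀ x, f xb + ((y * (x - xb) : ℝ) : EReal) ≤ f x}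

lemma lem_pos (y : ℝ) : (0:EReal) ≤ conj1 fEx y := by
  rw [conj1, le_iSup_iff]
  intro b hb
  have h : ∀ n : ℕ, ((y * (1/(n+1)) : ℝ) : EReal) ≤ b := by
    intro n
    have h1 : (0:ℝ) < 1/(n+1) := by positivity
    have hf : fEx (1/((n:ℝ)+1)) = 0 := by
      unfold fEx
      rw [if_neg (not_lt.2 h1.le), if_neg h1.ne']
    have h2 := hb (1/((n:ℝ)+1))
    rw [hf, sub_zero] at h2
    exact h2
  have ht : Filter.Tendsto (fun n : ℕ => ((y * (1/(n+1)) : ℝ) : EReal)) Filter.atTop (nhds 0) := by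
    have h2 : Filter.Tendsto (fun n : ℕ => (y * (1/(n+1)) : ℝ)) Filter.atTop (nhds 0) := by
      simpa using (tendsto_one_div_add_atTop_nhds_zero_nat).const_mul y
    exact EReal.tendsto_coe.2 h2
  exact le_of_tendsto' ht h

lemma lem_le : ∀ x : ℝ, clfEx x ≤ fEx x := by
  intro x
  unfold fEx clfEx
  split_ifs <;> norm_num

lemma lem_eq (y : ℝ) : conj1 fEx y = conj1 clfEx y := by
  apply le_antisymm
  · exact iSup_mono fun x => EReal.sub_le_sub le_rfl (lem_le x)
  · apply iSup_le
    intro x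
    rcases eq_or_ne x 0 with rfl | hx
    · have h0 : ((y * 0 : ℝ) : EReal) - clfEx 0 = 0 := by simp [clfEx]
      rw [h0]; exact lem_pos y
    · have h0 : clfEx x = fEx x := by
        unfold fEx clfEx; split_ifs <;> simp_all
      rw [h0]
      exact le_iSup (fun x => ((y * x : ℝ) : EReal) - fEx x) x

lemma lem_zero : conj1 clfEx 0 = 0 := by
  apply le_antisymm
  · apply iSup_le
    intro x
    have h0 : (0:EReal) ≤ clfEx x := by unfold clfEx; split_ifs <;> simp
    calc ((0 * x : ℝ) : EReal) - clfEx x ≤ ((0:ℝ):EReal) - 0 :=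
          EReal.sub_le_sub (by norm_num) h0
      _ = 0 := by norm_num
  · rw [conj1]
    refine le_trans ?_ (le_iSup _ (1:ℝ))
    norm_num [clfEx]

/-- With `g = fEx` (not closed) and `h = clfEx`: `y = 0` solves the dual
`min_{y ∈ dom h*}[h* − g*]` and `0 ∈ ∂g*(0)`, yet `x = 0` does not solve the primal
`min_{x ∈ dom g}[g − h]`. So closedness of `g` cannot be dropped. -/
theorem stmt8 :
    (conj1 clfEx 0 ≠ ⊤ ∧ ∀ y : ℝ, conj1 clfEx y ≠ ⊤ →
      conj1 clfEx 0 - conj1 fEx 0 ≤ conj1 clfEx y - conj1 fEx y) ∧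
    (0 : ℝ) ∈ subdiff1 (conj1 fEx) 0 ∧
    ¬ (∀ x : ℝ, fEx x ≠ ⊤ → fEx 0 - clfEx 0 ≤ fEx x - clfEx x) := by
  refine ⟨⟨by rw [lem_zero]; simp, ?_⟩, ⟨?_, ?_⟩, ?_⟩
  · intro y hy
    have h0 : conj1 clfEx 0 - conj1 fEx 0 = 0 := by
      rw [lem_zero, lem_eq, lem_zero]; simp
    rw [h0, ← lem_eq y]
    rw [← lem_eq y] at hy
    have hb : conj1 fEx y ≠ ⊥ := by
      intro h
      have hp := lem_pos y
      rw [h] at hp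
      simp at hp
    lift conj1 fEx y to ℝ using ⟨hy, hb⟩ with r hr
    rw [← EReal.coe_sub]
    norm_num
  · rw [lem_eq, lem_zero]; simp
  · intro x
    rw [lem_eq, lem_zero]
    simpa using lem_pos x
  · intro h
    have h1 := h 1 (by norm_num [fEx])
    norm_num [fEx, clfEx] at h1
    exact absurd h1 (by norm_num)
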